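/- Let $A$ be a C*-algebra and $(h_n)$ a sequence of self-adjoint elements of $A$. Define $G = \{(x,y) \in A \times A : \exists (x_n),\ x_n \to x,\ i[h_n,x_n] \to y\}$ and suppose $D = \{x : \exists y,\ (x,y) \in G\}$ is dense in $A$. Then $(0, a) \in G$ implies $a = 0$; consequently $G$ is the graph of a closed densely defined derivation $\delta$ on $A$. -/

import Mathlib

open Filter

/-- The graph limit of the inner derivations `ad(i h_n)`. -/
def graphLimit {A : Type*} [CStarAlgebra A] (h : ℕ → A) : Set (A × A) :=
  {p | ∃ x : ℕ → A, Tendsto x atTop (nhds p.1) ∧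
    Tendsto (fun n => Complex.I • (h n * x n - x n * h n)) atTop (nhds p.2)}

section helpers
open NormedSpace
variable {A : Type*} [CStarAlgebra A]

noncomputable def ratNormedAlgebraA : NormedAlgebra ℚ A := .restrictScalars ℚ ℂ A

attribute [local instance] ratNormedAlgebraA

noncomputable def conjE (b : A) (s : ℝ) (y : A) : A :=
  exp (s • b) * y * exp ((-s) • b)

lemma exp_smul_mul_exp_neg_smul (b : A) (s : ℝ) :
    exp (s • b) * exp ((-s) • b) = 1 := by
  rw [← exp_add_of_commute (((Commute.refl b).smul_right (-s)).smul_left s)]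
  rw [← add_smul, add_neg_cancel, zero_smul, exp_zero]

lemma star_exp_smul {b : A} (hb : star b = -b) (s : ℝ) :
    star (exp (s • b)) = exp ((-s) • b) := by
  rw [star_exp]
  congr 1
  rw [← Complex.coe_smul, ← Complex.coe_smul, star_smul, hb]
  simp [smul_neg]

lemma norm_exp_smul_eq_one [Nontrivial A] {b : A} (hb : star b = -b) (s : ℝ) :
    ‖exp (s • b)‖ = 1 := by
  have h1 : star (exp (s • b)) * exp (s • b) = 1 := by
    rw [star_exp_smul hb]
    have := exp_smul_mul_exp_neg_smul b (-s)
    rwa [neg_neg] at this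
  have h2 := CStarRing.norm_star_mul_self (x := exp (s • b))
  rw [h1, norm_one] at h2
  nlinarith [norm_nonneg (exp (s • b))]

lemma norm_conjE [Nontrivial A] {b : A} (hb : star b = -b) (s : ℝ) (y : A) :
    ‖conjE b s y‖ = ‖y‖ := by
  set u := exp (s • b) with hu
  set v := exp ((-s) • b) with hv
  have huv : u * v = 1 := exp_smul_mul_exp_neg_smul b s
  have hvu : v * u = 1 := by
    have := exp_smul_mul_exp_neg_smul b (-s); rwa [neg_neg] at this
  have hnu : ‖u‖ = 1 := norm_exp_smul_eq_one hb s
  have hnv : ‖v‖ = 1 := norm_exp_smul_eq_one hb (-s)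
  refine le_antisymm ?_ ?_
  · calc ‖u * y * v‖ ≤ ‖u * y‖ * ‖v‖ := norm_mul_le _ _
      _ ≤ ‖u‖ * ‖y‖ * ‖v‖ := by gcongr; exact norm_mul_le _ _
      _ = ‖y‖ := by rw [hnu, hnv]; ring
  · have hy : y = v * (u * y * v) * u := by
      calc y = (v * u) * y * (v * u) := by rw [hvu]; simp
        _ = v * (u * y * v) * u := by noncomm_ring
    calc ‖y‖ = ‖v * (u * y * v) * u‖ := by rw [← hy]
      _ ≤ ‖v * (u * y * v)‖ * ‖u‖ := norm_mul_le _ _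
      _ ≤ ‖v‖ * ‖u * y * v‖ * ‖u‖ := by gcongr; exact norm_mul_le _ _
      _ = ‖u * y * v‖ := by rw [hnu, hnv]; ring

lemma conjE_zero (b y : A) : conjE b 0 y = y := by
  simp [conjE, exp_zero]

lemma hasDerivAt_conjE (b y : A) (s : ℝ) :
    HasDerivAt (fun s => conjE b s y) (conjE b s (b * y - y * b)) s := by
  have d1 : HasDerivAt (fun s : ℝ => exp (s • b)) (exp (s • b) * b) s :=
    hasDerivAt_exp_smul_const b s
  have d2 : HasDerivAt (fun s : ℝ => exp ((-s) • b)) (-(exp ((-s) • b) * b)) s := by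
    have h := hasDerivAt_exp_smul_const (-b) s
    have he : ∀ u : ℝ, u • (-b) = (-u) • b := by intro u; rw [smul_neg, neg_smul]
    simp only [he] at h
    convert h using 1
    rw [mul_neg]
  have h2 := (d1.mul_const y).mul d2
  convert h2 using 1
  have hcomm : b * exp ((-s) • b) = exp ((-s) • b) * b :=
    (((Commute.refl b).smul_right (-s)).exp_right)
  show conjE b s (b * y - y * b) = _
  rw [conjE]
  set u := exp (s • b)
  set v := exp ((-s) • b)
  rw [show u * y * -(v * b) = u * y * -(b * v) by
    rw [(show Commute b v from ((Commute.refl b).smul_right (-s)).exp_right).eq]]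
  noncomm_ring
  rfl

lemma continuous_conjE (b y : A) : Continuous (fun s => conjE b s y) :=
  continuous_iff_continuousAt.mpr fun s => (hasDerivAt_conjE b y s).continuousAt

lemma ad_smul_eq (hn y : A) :
    Complex.I • (hn * y - y * hn) = (Complex.I • hn) * y - y * (Complex.I • hn) := by
  rw [smul_sub, smul_mul_assoc, mul_smul_comm]

end helpers

lemma key_zero {A : Type*} [CStarAlgebra A] [Nontrivial A] (h : ℕ → A)
    (hsa : ∀ n, IsSelfAdjoint (h n))
    (hD : Dense {x : A | ∃ y : A, (x, y) ∈ graphLimit h}) (a : A)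
    (ha : ((0 : A), a) ∈ graphLimit h) : a = 0 := by
  simp only [graphLimit, Set.mem_setOf_eq] at ha
  obtain ⟨xs, hx0, hxa⟩ := ha
  simp only [ad_smul_eq] at hxa
  set b : ℕ → A := fun n => Complex.I • h n with hbdef
  have hb : ∀ n, star (b n) = -(b n) := by
    intro n
    rw [hbdef, star_smul, (hsa n).star_eq, Complex.star_def, Complex.conj_I, neg_smul]
  have step1 : ∀ z w : A, (z, w) ∈ graphLimit h → ‖z‖ ≤ ‖z + a‖ := by
    rintro z w ⟨zs, hz, hw⟩
    replace hz : Tendsto zs atTop (nhds z) := hz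
    simp only [ad_smul_eq] at hw
    have H : ∀ t : ℝ, 0 < t → ‖z‖ - t * ‖w‖ ≤ ‖z + a‖ := by
      intro t ht
      have main : ∀ n : ℕ,
          t * ‖z‖ - ((2 * ‖z - zs n‖ + t * ‖b n * zs n - zs n * b n‖) * t
            + (‖a - (b n * xs n - xs n * b n)‖ * t + 2 * ‖xs n‖)) ≤ ‖z + a‖ * t := by
        intro n
        have hnb := hb n
        have normC : ∀ (s : ℝ) (y : A), ‖conjE (b n) s y‖ = ‖y‖ :=
          fun s y => norm_conjE hnb s y
        have contC : ∀ y : A, Continuous fun s => conjE (b n) s y := continuous_conjE (b n)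
        have ftc : ∀ y : A, (∫ s in (0:ℝ)..t, conjE (b n) s (b n * y - y * b n))
            = conjE (b n) t y - y := by
          intro y
          have := intervalIntegral.integral_eq_sub_of_hasDerivAt
            (f := fun s => conjE (b n) s y)
            (f' := fun s => conjE (b n) s (b n * y - y * b n))
            (fun s _ => hasDerivAt_conjE (b n) y s)
            ((contC _).intervalIntegrable 0 t)
          simpa [conjE_zero] using this
        have ibound : ∀ y : A, ‖∫ s in (0:ℝ)..t, conjE (b n) s y‖ ≤ ‖y‖ * t := by
          intro y
          have := intervalIntegral.norm_integral_le_of_norm_le_const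
            (C := ‖y‖) (f := fun s => conjE (b n) s y) (a := 0) (b := t)
            (fun s _ => le_of_eq (normC s y))
          simpa [abs_of_pos ht] using this
        set dzn := b n * zs n - zs n * b n with hdzn
        set dxn := b n * xs n - xs n * b n with hdxn
        have hsplit : (∫ s in (0:ℝ)..t, conjE (b n) s (z + a))
            = (∫ s in (0:ℝ)..t, conjE (b n) s z) + ∫ s in (0:ℝ)..t, conjE (b n) s a := by
          rw [← intervalIntegral.integral_add ((contC z).intervalIntegrable 0 t)
            ((contC a).intervalIntegrable 0 t)]
          congr 1; funext s; simp [conjE, mul_add, add_mul]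
        have mvt : ∀ s ∈ Set.Icc (0:ℝ) t, ‖conjE (b n) s (zs n) - zs n‖ ≤ ‖dzn‖ * s := by
          intro s hs
          have := Convex.norm_image_sub_le_of_norm_hasDerivWithin_le
            (f := fun s => conjE (b n) s (zs n)) (f' := fun s => conjE (b n) s dzn)
            (C := ‖dzn‖) (s := Set.Icc (0:ℝ) t)
            (fun σ _ => (hasDerivAt_conjE (b n) (zs n) σ).hasDerivWithinAt)
            (fun σ _ => le_of_eq (normC σ dzn))
            (convex_Icc 0 t) (Set.left_mem_Icc.mpr ht.le) hs
          simpa [conjE_zero, Real.norm_eq_abs, abs_of_nonneg hs.1] using this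
        have hz_int : ‖(∫ s in (0:ℝ)..t, conjE (b n) s z) - t • z‖
            ≤ (2 * ‖z - zs n‖ + t * ‖dzn‖) * t := by
          have heq : (∫ s in (0:ℝ)..t, conjE (b n) s z) - t • z
              = ∫ s in (0:ℝ)..t, (conjE (b n) s z - z) := by
            rw [intervalIntegral.integral_sub ((contC z).intervalIntegrable 0 t)
              (intervalIntegrable_const), intervalIntegral.integral_const]
            simp
          rw [heq]
          have hb2 : ∀ s ∈ Set.uIoc (0:ℝ) t, ‖conjE (b n) s z - z‖
              ≤ 2 * ‖z - zs n‖ + t * ‖dzn‖ := by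
            intro s hs
            rw [Set.uIoc_of_le ht.le] at hs
            have hs0 : 0 ≤ s := hs.1.le
            have hst : s ≤ t := hs.2
            have tri : ‖conjE (b n) s z - z‖ ≤ ‖conjE (b n) s z - conjE (b n) s (zs n)‖
                + ‖conjE (b n) s (zs n) - zs n‖ + ‖zs n - z‖ := by
              have := dist_triangle4 (conjE (b n) s z) (conjE (b n) s (zs n)) (zs n) z
              simpa [dist_eq_norm] using this
            have e1 : conjE (b n) s z - conjE (b n) s (zs n) = conjE (b n) s (z - zs n) := by
              simp [conjE, mul_sub, sub_mul]
            have e1' : ‖conjE (b n) s z - conjE (b n) s (zs n)‖ = ‖z - zs n‖ := by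
              rw [e1, normC]
            have e2 := mvt s ⟨hs0, hst⟩
            have e3 : ‖zs n - z‖ = ‖z - zs n‖ := norm_sub_rev _ _
            have e4 : ‖dzn‖ * s ≤ t * ‖dzn‖ := by
              rw [mul_comm]; exact mul_le_mul_of_nonneg_right hst (norm_nonneg _)
            linarith
          have := intervalIntegral.norm_integral_le_of_norm_le_const
            (C := 2 * ‖z - zs n‖ + t * ‖dzn‖) (a := (0:ℝ)) (b := t)
            (f := fun s => conjE (b n) s z - z) hb2
          simpa [abs_of_pos ht] using this
        have ha_int : ‖∫ s in (0:ℝ)..t, conjE (b n) s a‖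
            ≤ ‖a - dxn‖ * t + 2 * ‖xs n‖ := by
          have heq : (∫ s in (0:ℝ)..t, conjE (b n) s a)
              = (∫ s in (0:ℝ)..t, conjE (b n) s (a - dxn)) + (conjE (b n) t (xs n) - xs n) := by
            rw [← ftc (xs n), ← intervalIntegral.integral_add
              ((contC _).intervalIntegrable 0 t) ((contC _).intervalIntegrable 0 t)]
            congr 1; funext s
            simp only [conjE, hdxn, mul_sub, sub_mul, mul_add, add_mul]
            abel
          rw [heq]
          calc ‖(∫ s in (0:ℝ)..t, conjE (b n) s (a - dxn)) + (conjE (b n) t (xs n) - xs n)‖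
              ≤ ‖∫ s in (0:ℝ)..t, conjE (b n) s (a - dxn)‖ + ‖conjE (b n) t (xs n) - xs n‖ :=
                norm_add_le _ _
            _ ≤ ‖a - dxn‖ * t + (‖conjE (b n) t (xs n)‖ + ‖xs n‖) :=
                add_le_add (ibound _) (norm_sub_le _ _)
            _ = ‖a - dxn‖ * t + 2 * ‖xs n‖ := by rw [normC]; ring
        have A1 : ‖∫ s in (0:ℝ)..t, conjE (b n) s (z + a)‖ ≤ ‖z + a‖ * t := ibound _
        have A2 : ‖∫ s in (0:ℝ)..t, conjE (b n) s z‖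
            - ‖∫ s in (0:ℝ)..t, conjE (b n) s a‖
            ≤ ‖∫ s in (0:ℝ)..t, conjE (b n) s (z + a)‖ := by
          rw [hsplit]
          have := norm_le_add_norm_add (∫ s in (0:ℝ)..t, conjE (b n) s z)
            (∫ s in (0:ℝ)..t, conjE (b n) s a)
          linarith
        have A3 : t * ‖z‖ - ‖(∫ s in (0:ℝ)..t, conjE (b n) s z) - t • z‖
            ≤ ‖∫ s in (0:ℝ)..t, conjE (b n) s z‖ := by
          have h1 : ‖t • z‖ = t * ‖z‖ := by
            rw [norm_smul, Real.norm_eq_abs, abs_of_pos ht]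
          have h2 := norm_sub_norm_le (t • z) (∫ s in (0:ℝ)..t, conjE (b n) s z)
          rw [h1, norm_sub_rev] at h2
          linarith
        linarith
      have c1 : Tendsto (fun n => ‖z - zs n‖) atTop (nhds 0) := by
        have h0 : Tendsto (fun n => z - zs n) atTop (nhds (z - z)) :=
          Tendsto.sub tendsto_const_nhds hz
        simpa using h0.norm
      have c2 : Tendsto (fun n => ‖b n * zs n - zs n * b n‖) atTop (nhds ‖w‖) := hw.norm
      have c3 : Tendsto (fun n => ‖a - (b n * xs n - xs n * b n)‖) atTop (nhds 0) := by
        have h0 : Tendsto (fun n => a - (b n * xs n - xs n * b n)) atTop (nhds (a - a)) :=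
          Tendsto.sub tendsto_const_nhds hxa
        simpa using h0.norm
      have c4 : Tendsto (fun n => ‖xs n‖) atTop (nhds 0) := by
        simpa using hx0.norm
      have hlim : Tendsto (fun n => t * ‖z‖ - ((2 * ‖z - zs n‖ + t * ‖b n * zs n - zs n * b n‖) * t
            + (‖a - (b n * xs n - xs n * b n)‖ * t + 2 * ‖xs n‖))) atTop
          (nhds (t * ‖z‖ - ((2 * 0 + t * ‖w‖) * t + (0 * t + 2 * 0)))) :=
        tendsto_const_nhds.sub ((((c1.const_mul 2).add (c2.const_mul t)).mul_const t).add
          ((c3.mul_const t).add (c4.const_mul 2)))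
      have hfin := le_of_tendsto hlim (Eventually.of_forall main)
      have : t * (‖z‖ - t * ‖w‖) ≤ t * ‖z + a‖ := by nlinarith [hfin]
      exact le_of_mul_le_mul_left this ht
    have hcont : Tendsto (fun t : ℝ => ‖z‖ - t * ‖w‖) (nhdsWithin 0 (Set.Ioi 0)) (nhds ‖z‖) := by
      have h1 : Continuous fun t : ℝ => ‖z‖ - t * ‖w‖ :=
        continuous_const.sub (continuous_id.mul continuous_const)
      have h2 : Tendsto (fun t : ℝ => ‖z‖ - t * ‖w‖) (nhdsWithin 0 (Set.Ioi 0))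
          (nhds (‖z‖ - 0 * ‖w‖)) :=
        (h1.tendsto 0).mono_left nhdsWithin_le_nhds
      simpa using h2
    exact le_of_tendsto hcont (eventually_nhdsWithin_of_forall fun t htt => H t htt)
  have all : ∀ z : A, ‖z‖ ≤ ‖z + a‖ := by
    have hclosed : IsClosed {z : A | ‖z‖ ≤ ‖z + a‖} :=
      isClosed_le continuous_norm ((continuous_id.add continuous_const).norm)
    have hsub : {x : A | ∃ y : A, (x, y) ∈ graphLimit h} ⊆ {z : A | ‖z‖ ≤ ‖z + a‖} := by
      rintro x ⟨y, hy⟩; exact step1 x y hy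
    intro z
    exact hclosed.closure_subset ((hD.mono hsub) z)
  have h0 := all (-a)
  rw [neg_add_cancel, norm_zero, norm_neg] at h0
  exact norm_le_zero_iff.mp h0

lemma graphLimit_mul {A : Type*} [CStarAlgebra A] (h : ℕ → A)
    {x₁ y₁ x₂ y₂ : A} (h1 : (x₁, y₁) ∈ graphLimit h) (h2 : (x₂, y₂) ∈ graphLimit h) :
    (x₁ * x₂, y₁ * x₂ + x₁ * y₂) ∈ graphLimit h := by
  obtain ⟨u, hu, hu'⟩ := h1
  obtain ⟨v, hv, hv'⟩ := h2
  replace hu : Tendsto u atTop (nhds x₁) := hu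
  replace hv : Tendsto v atTop (nhds x₂) := hv
  replace hu' : Tendsto (fun n => Complex.I • (h n * u n - u n * h n)) atTop (nhds y₁) := hu'
  replace hv' : Tendsto (fun n => Complex.I • (h n * v n - v n * h n)) atTop (nhds y₂) := hv'
  refine ⟨fun n => u n * v n, hu.mul hv, ?_⟩
  have key : ∀ n, Complex.I • (h n * (u n * v n) - (u n * v n) * h n)
      = (Complex.I • (h n * u n - u n * h n)) * v n
        + u n * (Complex.I • (h n * v n - v n * h n)) := by
    intro n
    simp only [smul_mul_assoc, mul_smul_comm, ← smul_add]
    congr 1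
    noncomm_ring
  show Tendsto _ atTop (nhds (x₁ * x₂, y₁ * x₂ + x₁ * y₂).2)
  simp only [key]
  exact (hu'.mul hv).add (hu.mul hv')

lemma graphLimit_isClosed {A : Type*} [CStarAlgebra A] (h : ℕ → A) :
    IsClosed (graphLimit h) := by
  refine IsSeqClosed.isClosed ?_
  intro q p hq hp
  choose x hx1 hx2 using hq
  have sel : ∀ k : ℕ, ∃ N : ℕ, ∀ n ≥ N, ‖x k n - (q k).1‖ < 1 / ((k : ℝ) + 1) ∧
      ‖Complex.I • (h n * x k n - x k n * h n) - (q k).2‖ < 1 / ((k : ℝ) + 1) := by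
    intro k
    obtain ⟨N1, hN1⟩ := Metric.tendsto_atTop.mp (hx1 k) (1 / ((k : ℝ) + 1)) (by positivity)
    obtain ⟨N2, hN2⟩ := Metric.tendsto_atTop.mp (hx2 k) (1 / ((k : ℝ) + 1)) (by positivity)
    refine ⟨max N1 N2, fun n hn => ⟨?_, ?_⟩⟩
    · simpa [dist_eq_norm] using hN1 n (le_trans (le_max_left _ _) hn)
    · simpa [dist_eq_norm] using hN2 n (le_trans (le_max_right _ _) hn)
  choose N hN using sel
  set M : ℕ → ℕ := fun k => k + (Finset.range (k + 1)).sup N with hM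
  have hMk : ∀ k, N k ≤ M k := fun k =>
    (Finset.le_sup (Finset.self_mem_range_succ k)).trans (Nat.le_add_left _ _)
  have hkM : ∀ k, k ≤ M k := fun k => Nat.le_add_right _ _
  set φ : ℕ → ℕ := fun n => Nat.findGreatest (fun k => M k ≤ n) n with hφ
  have hφ1 : ∀ k n, M k ≤ n → k ≤ φ n := fun k n hkn =>
    Nat.le_findGreatest ((hkM k).trans hkn) hkn
  have hφ2 : ∀ n, M 0 ≤ n → M (φ n) ≤ n := by
    intro n hn
    exact Nat.findGreatest_spec (P := fun k => M k ≤ n) (m := 0) (Nat.zero_le n) hn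
  have hφtop : Tendsto φ atTop atTop :=
    tendsto_atTop_atTop.mpr fun k => ⟨M k, fun n hn => hφ1 k n hn⟩
  have hp1 : Tendsto (fun k => (q k).1) atTop (nhds p.1) :=
    (continuous_fst.tendsto p).comp hp
  have hp2 : Tendsto (fun k => (q k).2) atTop (nhds p.2) :=
    (continuous_snd.tendsto p).comp hp
  have hinv : Tendsto (fun n => 1 / ((φ n : ℝ) + 1)) atTop (nhds 0) :=
    tendsto_one_div_add_atTop_nhds_zero_nat.comp hφtop
  have hq1 : Tendsto (fun n => ‖(q (φ n)).1 - p.1‖) atTop (nhds 0) := by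
    have h0 : Tendsto (fun k => (q k).1 - p.1) atTop (nhds (p.1 - p.1)) :=
      hp1.sub tendsto_const_nhds
    have : Tendsto (fun k => ‖(q k).1 - p.1‖) atTop (nhds 0) := by
      simpa using h0.norm
    exact this.comp hφtop
  have hq2 : Tendsto (fun n => ‖(q (φ n)).2 - p.2‖) atTop (nhds 0) := by
    have h0 : Tendsto (fun k => (q k).2 - p.2) atTop (nhds (p.2 - p.2)) :=
      hp2.sub tendsto_const_nhds
    have : Tendsto (fun k => ‖(q k).2 - p.2‖) atTop (nhds 0) := by
      simpa using h0.norm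
    exact this.comp hφtop
  have hgood : ∀ n, M 0 ≤ n → (‖x (φ n) n - (q (φ n)).1‖ < 1 / ((φ n : ℝ) + 1) ∧
      ‖Complex.I • (h n * x (φ n) n - x (φ n) n * h n) - (q (φ n)).2‖ < 1 / ((φ n : ℝ) + 1)) :=
    fun n hn => hN (φ n) n ((hMk (φ n)).trans (hφ2 n hn))
  refine ⟨fun n => x (φ n) n, ?_, ?_⟩
  · rw [tendsto_iff_norm_sub_tendsto_zero]
    refine squeeze_zero' (Eventually.of_forall fun n => norm_nonneg _) ?_
      (by simpa using hinv.add hq1)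
    filter_upwards [eventually_ge_atTop (M 0)] with n hn
    calc ‖x (φ n) n - p.1‖ ≤ ‖x (φ n) n - (q (φ n)).1‖ + ‖(q (φ n)).1 - p.1‖ := by
          simpa [dist_eq_norm] using dist_triangle (x (φ n) n) ((q (φ n)).1) p.1
      _ ≤ 1 / ((φ n : ℝ) + 1) + ‖(q (φ n)).1 - p.1‖ := by
          have := (hgood n hn).1; linarith
      _ = ((φ n : ℝ) + 1)⁻¹ + ‖(q (φ n)).1 - p.1‖ := by rw [one_div]
  · rw [tendsto_iff_norm_sub_tendsto_zero]
    refine squeeze_zero' (Eventually.of_forall fun n => norm_nonneg _) ?_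
      (by simpa using hinv.add hq2)
    filter_upwards [eventually_ge_atTop (M 0)] with n hn
    calc ‖Complex.I • (h n * x (φ n) n - x (φ n) n * h n) - p.2‖
        ≤ ‖Complex.I • (h n * x (φ n) n - x (φ n) n * h n) - (q (φ n)).2‖
          + ‖(q (φ n)).2 - p.2‖ := by
          simpa [dist_eq_norm] using
            dist_triangle (Complex.I • (h n * x (φ n) n - x (φ n) n * h n)) ((q (φ n)).2) p.2
      _ ≤ 1 / ((φ n : ℝ) + 1) + ‖(q (φ n)).2 - p.2‖ := by
          have := (hgood n hn).2; linarith
      _ = ((φ n : ℝ) + 1)⁻¹ + ‖(q (φ n)).2 - p.2‖ := by rw [one_div]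

/-- If the domain of the graph limit `G` of `ad(i h_n)` is dense, then `(0, a) ∈ G` implies
`a = 0`; consequently `G` is the graph of a (single-valued) closed derivation. -/
theorem stmt_7 {A : Type*} [CStarAlgebra A] (h : ℕ → A)
    (hsa : ∀ n, IsSelfAdjoint (h n))
    (hD : Dense {x : A | ∃ y : A, (x, y) ∈ graphLimit h}) :
    (∀ a : A, ((0 : A), a) ∈ graphLimit h → a = 0) ∧
    (∀ x y y' : A, (x, y) ∈ graphLimit h → (x, y') ∈ graphLimit h → y = y') ∧
    IsClosed (graphLimit h) ∧
    (∀ x₁ y₁ x₂ y₂ : A, (x₁, y₁) ∈ graphLimit h → (x₂, y₂) ∈ graphLimit h →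
      (x₁ * x₂, y₁ * x₂ + x₁ * y₂) ∈ graphLimit h) := by
  rcases subsingleton_or_nontrivial A with hs | hn
  · exact ⟨fun a _ => Subsingleton.elim _ _, fun x y y' _ _ => Subsingleton.elim _ _,
      graphLimit_isClosed h, fun x₁ y₁ x₂ y₂ h1 h2 => graphLimit_mul h h1 h2⟩
  · refine ⟨key_zero h hsa hD, ?_, graphLimit_isClosed h,
      fun x₁ y₁ x₂ y₂ h1 h2 => graphLimit_mul h h1 h2⟩
    intro x y y' hy hy'
    obtain ⟨u, hu, hu'⟩ := hy
    obtain ⟨v, hv, hv'⟩ := hy'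
    replace hu : Tendsto u atTop (nhds x) := hu
    replace hv : Tendsto v atTop (nhds x) := hv
    replace hu' : Tendsto (fun n => Complex.I • (h n * u n - u n * h n)) atTop (nhds y) := hu'
    replace hv' : Tendsto (fun n => Complex.I • (h n * v n - v n * h n)) atTop (nhds y') := hv'
    have hmem : ((0 : A), y - y') ∈ graphLimit h := by
      refine ⟨fun n => u n - v n, ?_, ?_⟩
      · have : Tendsto (fun n => u n - v n) atTop (nhds (x - x)) := hu.sub hv
        simpa using this
      · have e : ∀ n, Complex.I • (h n * (u n - v n) - (u n - v n) * h n)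
            = Complex.I • (h n * u n - u n * h n) - Complex.I • (h n * v n - v n * h n) := by
          intro n; rw [← smul_sub]; congr 1; noncomm_ring
        show Tendsto _ atTop (nhds ((0 : A), y - y').2)
        simp only [e]
        exact hu'.sub hv'
    exact sub_eq_zero.mp (key_zero h hsa hD _ hmem)
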